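/- For every k ≥ 1 and every k-bounded coloring f : [ℕ]^{!ω} → ℕ, there exists a coloring g : [ℕ]^{!ω} → {0, 1, …, k−1} such that every infinite set H ⊆ ℕ on which g is constant on [H]^{!ω} is a rainbow for f. -/
import Mathlib


/-- A finite set `s ⊆ ℕ` is exactly ω-large if `|s| = 1 + min s`. -/
def ExLarge (s : Finset ℕ) : Prop :=
  s.Nonempty ∧ s.card = 1 + sInf (↑s : Set ℕ)

/-- `f : [ℕ]^{!ω} → ℕ` is `k`-bounded: every color has at most `k`
exactly ω-large preimages. -/
def KBoundedL (k : ℕ) (f : Finset ℕ → ℕ) : Prop :=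
  ∀ c : ℕ, ∃ T : Finset (Finset ℕ), T.card ≤ k ∧
    ∀ u : Finset ℕ, ExLarge u → f u = c → u ∈ T

/-- `H` is a rainbow for `f : [ℕ]^{!ω} → ℕ`: `f` is injective on `[H]^{!ω}`. -/
def RainbowL (f : Finset ℕ → ℕ) (H : Set ℕ) : Prop :=
  ∀ s t : Finset ℕ, ExLarge s → ExLarge t → ↑s ⊆ H → ↑t ⊆ H → f s = f t → s = t

/-- for every `k ≥ 1` and `k`-bounded `f : [ℕ]^{!ω} → ℕ` there is
a coloring `g : [ℕ]^{!ω} → k` such that every infinite set homogeneous for `g`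
is a rainbow for `f`. -/
theorem stmt9 (k : ℕ) (hk : 1 ≤ k) (f : Finset ℕ → ℕ) (hf : KBoundedL k f) :
    ∃ g : Finset ℕ → Fin k,
      ∀ H : Set ℕ, H.Infinite →
        (∃ c : Fin k, ∀ s : Finset ℕ, ExLarge s → ↑s ⊆ H → g s = c) →
        RainbowL f H := by
  classical
  set T : ℕ → Finset (Finset ℕ) := fun c => (hf c).choose with hT
  have hTcard : ∀ c, (T c).card ≤ k := fun c => (hf c).choose_spec.1
  have hTmem : ∀ u, ExLarge u → u ∈ T (f u) := fun u hu =>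
    (hf (f u)).choose_spec.2 u hu rfl
  set e : Finset ℕ → ℕ := fun u => Encodable.encode u with he
  have hein : Function.Injective e := Encodable.encode_injective
  have key : ∀ s, s ∈ T (f s) →
      ((T (f s)).filter (fun u => e u < e s)).card < k := by
    intro s hs
    refine lt_of_lt_of_le ?_ (hTcard (f s))
    refine Finset.card_lt_card ⟨Finset.filter_subset _ _, ?_⟩
    intro hsub
    have := hsub hs
    simp at this
  refine ⟨fun s => if h : s ∈ T (f s) then
      ⟨((T (f s)).filter (fun u => e u < e s)).card, key s h⟩ else ⟨0, hk⟩, ?_⟩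
  rintro H _ ⟨c, hc⟩ s t hs ht hsH htH hfst
  have hgs := hc s hs hsH
  have hgt := hc t ht htH
  have hsT : s ∈ T (f s) := hTmem s hs
  have htT : t ∈ T (f s) := hfst ▸ hTmem t ht
  simp only at hgs hgt
  rw [dif_pos hsT] at hgs
  simp only [← hfst] at hgt
  rw [dif_pos htT] at hgt
  have hcards : ((T (f s)).filter (fun u => e u < e s)).card
      = ((T (f s)).filter (fun u => e u < e t)).card := by
    have := hgs.trans hgt.symm
    exact Fin.mk.inj_iff.mp this
  by_contra hne
  have hene : e s ≠ e t := fun h => hne (hein h)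
  rcases lt_or_gt_of_ne hene with hlt | hlt
  · have : ((T (f s)).filter (fun u => e u < e s)).card
        < ((T (f s)).filter (fun u => e u < e t)).card := by
      refine Finset.card_lt_card ⟨?_, ?_⟩
      · intro u hu
        rw [Finset.mem_filter] at hu ⊢
        exact ⟨hu.1, lt_trans hu.2 hlt⟩
      · intro hsub
        have := hsub (Finset.mem_filter.mpr ⟨hsT, hlt⟩)
        simp at this
    omega
  · have : ((T (f s)).filter (fun u => e u < e t)).card
        < ((T (f s)).filter (fun u => e u < e s)).card := by
      refine Finset.card_lt_card ⟨?_, ?_⟩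
      · intro u hu
        rw [Finset.mem_filter] at hu ⊢
        exact ⟨hu.1, lt_trans hu.2 hlt⟩
      · intro hsub
        have := hsub (Finset.mem_filter.mpr ⟨htT, hlt⟩)
        simp at this
    omega
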